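/- Let k be a field, L a finite Galois field extension of k of degree r ≥ 1, and K an algebraically closed field containing L (so k ⊆ L ⊆ K compatibly). Then for every integer n ≥ 0, the set of k-algebra homomorphisms from the invariant subalgebra (L^{⊗_k n})^{Σ_n} to K is finite, with exactly C(r + n − 1, n) elements. -/

import Mathlib

open scoped TensorProduct
open PiTensorProduct

set_option synthInstance.maxHeartbeats 1000000
set_option maxHeartbeats 1000000

/-- For a commutative `k`-algebra `A` and a permutation `σ ∈ Σ_n`, the `k`-algebra
endomorphism of the `n`-fold tensor power `A^{⊗_k n} = ⨂[k] i : Fin n, A` permuting the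
tensor factors along `σ`. -/
noncomputable def permAlgHom (k : Type*) [CommSemiring k] (A : Type*) [CommSemiring A]
    [Algebra k A] {n : ℕ} (σ : Equiv.Perm (Fin n)) :
    (⨂[k] _ : Fin n, A) →ₐ[k] (⨂[k] _ : Fin n, A) :=
  PiTensorProduct.liftAlgHom ((PiTensorProduct.tprod k).domDomCongr σ)
    (by simp [PiTensorProduct.one_def]; rfl)
    (fun x y => by simp [MultilinearMap.domDomCongr_apply]; rfl)

/-- The subalgebra `(A^{⊗_k n})^{Σ_n}` of `Σ_n`-invariant elements of the `n`-fold tensor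
power of a commutative `k`-algebra `A`. -/
noncomputable def symInvariants (k : Type*) [CommSemiring k] (A : Type*) [CommSemiring A]
    [Algebra k A] (n : ℕ) : Subalgebra k (⨂[k] _ : Fin n, A) :=
  ⨅ σ : Equiv.Perm (Fin n), AlgHom.equalizer (permAlgHom k A σ) (AlgHom.id k _)

namespace SymPowProofAux

open Polynomial

variable {k L K : Type*} [Field k] [Field L] [Algebra k L] [Field K] [Algebra k K] {n : ℕ}

lemma permAlgHom_tprod (σ : Equiv.Perm (Fin n)) (b : Fin n → L) :
    permAlgHom k L σ (tprod k b) = tprod k (fun i => b (σ i)) := by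
  simp [permAlgHom]

/-- The `i`-th canonical inclusion `L → L^{⊗ n}`. -/
noncomputable def sAH (i : Fin n) : L →ₐ[k] ⨂[k] _ : Fin n, L :=
  singleAlgHom (R := k) (A := fun _ : Fin n => L) i

lemma permAlgHom_single (σ : Equiv.Perm (Fin n)) (i : Fin n) (a : L) :
    permAlgHom k L σ (sAH (k := k) i a) = sAH (σ⁻¹ i) a := by
  rw [sAH, sAH, singleAlgHom_apply, singleAlgHom_apply, permAlgHom_tprod]
  congr 1
  funext j
  rw [MonoidHom.mulSingle_apply, MonoidHom.mulSingle_apply,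
    Pi.mulSingle_apply, Pi.mulSingle_apply]
  congr 1
  simp only [eq_iff_iff]
  constructor
  · intro h; rw [← h]; simp
  · intro h; rw [h]; simp

lemma mem_symInvariants {x : ⨂[k] _ : Fin n, L} :
    x ∈ symInvariants k L n ↔ ∀ σ : Equiv.Perm (Fin n), permAlgHom k L σ x = x := by
  simp [symInvariants, Algebra.mem_iInf, AlgHom.mem_equalizer]

/-- The algebra homomorphism `L^{⊗ n} → K` induced by a tuple of embeddings `L → K`. -/
noncomputable def ofTuple (f : Fin n → (L →ₐ[k] K)) : (⨂[k] _ : Fin n, L) →ₐ[k] K :=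
  PiTensorProduct.liftAlgHom
    ((MultilinearMap.mkPiAlgebra k (Fin n) K).compLinearMap fun i => (f i).toLinearMap)
    (by simp) (fun x y => by simp [Finset.prod_mul_distrib])

@[simp] lemma ofTuple_tprod (f : Fin n → (L →ₐ[k] K)) (b : Fin n → L) :
    ofTuple f (tprod k b) = ∏ i, f i (b i) := by
  show lift ((MultilinearMap.mkPiAlgebra k (Fin n) K).compLinearMap fun i => (f i).toLinearMap)
    (tprod k b) = _
  simp

/-- The tuple of embeddings `L → K` induced by an algebra homomorphism `L^{⊗ n} → K`. -/
noncomputable def toTuple (φ : (⨂[k] _ : Fin n, L) →ₐ[k] K) : Fin n → (L →ₐ[k] K) :=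
  fun i => φ.comp (sAH i)

@[simp] lemma toTuple_apply (φ : (⨂[k] _ : Fin n, L) →ₐ[k] K) (i : Fin n) (a : L) :
    toTuple φ i a = φ (sAH i a) := rfl

lemma ofTuple_single (f : Fin n → (L →ₐ[k] K)) (i : Fin n) (a : L) :
    ofTuple f (sAH (k := k) i a) = f i a := by
  rw [sAH, singleAlgHom_apply, ofTuple_tprod]
  have h : ∀ j, j ≠ i → f j ((MonoidHom.mulSingle (fun _ : Fin n => L) i) a j) = 1 := by
    intro j hj
    rw [MonoidHom.mulSingle_apply, Pi.mulSingle_apply, if_neg hj, _root_.map_one]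
  rw [Fintype.prod_eq_single i h, MonoidHom.mulSingle_apply, Pi.mulSingle_apply, if_pos rfl]

lemma toTuple_ofTuple (f : Fin n → (L →ₐ[k] K)) : toTuple (ofTuple f) = f := by
  funext i
  apply AlgHom.ext
  intro a
  rw [toTuple_apply, ofTuple_single]

lemma ofTuple_toTuple (φ : (⨂[k] _ : Fin n, L) →ₐ[k] K) : ofTuple (toTuple φ) = φ := by
  apply PiTensorProduct.algHom_ext
  intro i
  apply AlgHom.ext
  intro a
  show ofTuple (toTuple φ) (singleAlgHom (R := k) (A := fun _ : Fin n => L) i a)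
      = φ (singleAlgHom (R := k) (A := fun _ : Fin n => L) i a)
  rw [show (singleAlgHom (R := k) (A := fun _ : Fin n => L) i a) = sAH (k := k) i a from rfl,
    ofTuple_single, toTuple_apply]

lemma tprod_eq_prod_single (b : Fin n → L) :
    tprod k b = ∏ i, sAH (k := k) i (b i) := by
  have h : b = ∏ j, Pi.mulSingle j (b j) := by
    funext i
    rw [Finset.prod_apply]
    exact (Fintype.prod_pi_mulSingle i b).symm
  calc tprod k b = tprod k (∏ j, Pi.mulSingle j (b j)) := by rw [← h]
    _ = ∏ j, tprod k (Pi.mulSingle j (b j)) := by rw [PiTensorProduct.tprod_prod]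
    _ = _ := by
        apply Finset.prod_congr rfl
        intro j _
        rw [sAH, singleAlgHom_apply]
        rfl

lemma isIntegral_tensor (k L : Type*) [Field k] [Field L] [Algebra k L]
    [FiniteDimensional k L] {n : ℕ} : Algebra.IsIntegral k (⨂[k] _ : Fin n, L) := by
  have hle : (⊤ : Submodule k (⨂[k] _ : Fin n, L)) ≤
      Subalgebra.toSubmodule (integralClosure k (⨂[k] _ : Fin n, L)) := by
    rw [← PiTensorProduct.span_tprod_eq_top, Submodule.span_le]
    rintro _ ⟨b, rfl⟩
    rw [SetLike.mem_coe, Subalgebra.mem_toSubmodule, tprod_eq_prod_single]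
    exact prod_mem fun i _ => (IsIntegral.of_finite k (b i)).map (sAH i)
  exact ⟨fun x => hle (Submodule.mem_top)⟩

/-- The invariant polynomial `∏ i (X - ι_i α)` over the tensor power. -/
noncomputable def invPoly (α : L) : Polynomial (⨂[k] _ : Fin n, L) :=
  ∏ i, (X - C (sAH (k := k) i α))

lemma invPoly_coeff_mem (α : L) (m : ℕ) :
    (invPoly (k := k) (n := n) α).coeff m ∈ symInvariants k L n := by
  rw [mem_symInvariants]
  intro σ
  have hmap : (invPoly (k := k) (n := n) α).map
      (permAlgHom k L σ : (⨂[k] _ : Fin n, L) →+* (⨂[k] _ : Fin n, L))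
      = invPoly (k := k) (n := n) α := by
    rw [invPoly, Polynomial.map_prod]
    simp only [Polynomial.map_sub, map_X, map_C, RingHom.coe_coe, permAlgHom_single]
    exact Equiv.prod_comp σ⁻¹ (fun j => X - C (sAH (k := k) j α))
  conv_rhs => rw [← hmap]
  rw [Polynomial.coeff_map]
  rfl

lemma multiset_eq_of_res_eq [FiniteDimensional k L] [Algebra.IsSeparable k L]
    (φ ψ : (⨂[k] _ : Fin n, L) →ₐ[k] K)
    (hres : φ.comp (symInvariants k L n).val = ψ.comp (symInvariants k L n).val) :
    Multiset.map (toTuple φ) Finset.univ.val = Multiset.map (toTuple ψ) Finset.univ.val := by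
  obtain ⟨α, hα⟩ := Field.exists_primitive_element k L
  have hadj : Algebra.adjoin k {α} = ⊤ := by
    have h1 := IntermediateField.adjoin_simple_toSubalgebra_of_isAlgebraic
      (F := k) (α := α) (IsIntegral.of_finite k α).isAlgebraic
    rw [hα] at h1
    exact h1.symm.trans (by rfl)
  have hinj : Function.Injective (fun f : L →ₐ[k] K => f α) := by
    intro f g h
    exact AlgHom.ext_of_adjoin_eq_top hadj (fun x hx => by
      rw [Set.mem_singleton_iff] at hx; subst hx; exact h)
  have hmapeq : (invPoly (k := k) (n := n) α).map (φ : (⨂[k] _ : Fin n, L) →+* K)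
      = (invPoly (k := k) (n := n) α).map (ψ : (⨂[k] _ : Fin n, L) →+* K) := by
    ext m
    rw [Polynomial.coeff_map, Polynomial.coeff_map]
    exact DFunLike.congr_fun hres ⟨_, invPoly_coeff_mem α m⟩
  have hprod : ∀ χ : (⨂[k] _ : Fin n, L) →ₐ[k] K,
      (invPoly (k := k) (n := n) α).map (χ : (⨂[k] _ : Fin n, L) →+* K)
      = ((Finset.univ.val.map (fun i => toTuple χ i α)).map (fun x => X - C x)).prod := by
    intro χ
    rw [invPoly, Polynomial.map_prod, Multiset.map_map]
    rw [Finset.prod_eq_multiset_prod]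
    apply congrArg
    apply Multiset.map_congr rfl
    intro i _
    simp [toTuple]
  have hroots : (Finset.univ.val.map (fun i => toTuple φ i α))
      = (Finset.univ.val.map (fun i => toTuple ψ i α)) := by
    have h1 := hprod φ
    have h2 := hprod ψ
    rw [hmapeq, h2] at h1
    have := congrArg Polynomial.roots h1
    rw [roots_multiset_prod_X_sub_C, roots_multiset_prod_X_sub_C] at this
    exact this.symm
  apply Multiset.map_injective hinj
  rw [Multiset.map_map, Multiset.map_map]
  exact hroots

lemma res_eq_of_multiset_eq [FiniteDimensional k L]
    (φ ψ : (⨂[k] _ : Fin n, L) →ₐ[k] K)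
    (hμ : Multiset.map (toTuple φ) Finset.univ.val = Multiset.map (toTuple ψ) Finset.univ.val) :
    φ.comp (symInvariants k L n).val = ψ.comp (symInvariants k L n).val := by
  classical
  letI : LinearOrder (L →ₐ[k] K) := LinearOrder.lift'
    (fun f => ((Fintype.equivFin (L →ₐ[k] K)) f : ℕ))
    (fun f g h => (Fintype.equivFin (L →ₐ[k] K)).injective (Fin.val_injective h))
  obtain ⟨τ, hτ⟩ : ∃ τ : Equiv.Perm (Fin n), toTuple ψ = toTuple φ ∘ τ := by
    set f := toTuple φ
    set g := toTuple ψ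
    have hperm : List.Perm (List.ofFn f) (List.ofFn g) := by
      rw [← Multiset.coe_eq_coe, ← Fin.univ_val_map, ← Fin.univ_val_map]
      exact hμ
    have h1 : List.Perm (List.ofFn (f ∘ Tuple.sort f)) (List.ofFn (g ∘ Tuple.sort g)) :=
      ((Equiv.Perm.ofFn_comp_perm (Tuple.sort f) f).trans hperm).trans
        (Equiv.Perm.ofFn_comp_perm (Tuple.sort g) g).symm
    have heq : f ∘ Tuple.sort f = g ∘ Tuple.sort g := by
      apply List.ofFn_injective
      exact List.Perm.eq_of_sortedLE
        ((Tuple.monotone_sort f).sortedLE_ofFn) ((Tuple.monotone_sort g).sortedLE_ofFn) h1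
    refine ⟨Tuple.sort f * (Tuple.sort g)⁻¹, ?_⟩
    funext j
    have := congrFun heq ((Tuple.sort g)⁻¹ j)
    simp only [Function.comp_apply] at this ⊢
    rw [show (Tuple.sort f * (Tuple.sort g)⁻¹) j = Tuple.sort f ((Tuple.sort g)⁻¹ j) from rfl]
    rw [this, ← Equiv.Perm.mul_apply, mul_inv_cancel, Equiv.Perm.one_apply]
  have hcomp : ψ = φ.comp (permAlgHom k L τ⁻¹) := by
    apply PiTensorProduct.algHom_ext
    intro i
    apply AlgHom.ext
    intro a
    show ψ (sAH (k := k) i a) = φ (permAlgHom k L τ⁻¹ (sAH (k := k) i a))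
    rw [permAlgHom_single]
    have := congrFun hτ i
    simp only [Function.comp_apply] at this
    calc ψ (sAH (k := k) i a) = toTuple ψ i a := rfl
      _ = toTuple φ (τ i) a := by rw [this]
      _ = φ (sAH (k := k) ((τ⁻¹)⁻¹ i) a) := by rw [inv_inv]; rfl
  apply AlgHom.ext
  rintro ⟨x, hx⟩
  show φ x = ψ x
  rw [hcomp]
  show φ x = φ (permAlgHom k L τ⁻¹ x)
  rw [(mem_symInvariants.mp hx) τ⁻¹]

lemma exists_extension [FiniteDimensional k L] [IsAlgClosed K]
    (χ : (symInvariants k L n) →ₐ[k] K) :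
    ∃ φ : (⨂[k] _ : Fin n, L) →ₐ[k] K, φ.comp (symInvariants k L n).val = χ := by
  classical
  haveI hInt : Algebra.IsIntegral (symInvariants k L n) (⨂[k] _ : Fin n, L) :=
    ⟨fun a => ((isIntegral_tensor k L).isIntegral a).tower_top⟩
  have hker : (RingHom.ker χ.toRingHom).IsPrime := RingHom.ker_isPrime _
  haveI := hker
  obtain ⟨p, -, hp, hcom⟩ := Ideal.exists_ideal_over_prime_of_isIntegral
    (RingHom.ker χ.toRingHom) (⊥ : Ideal (⨂[k] _ : Fin n, L)) (by
      intro x hx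
      rw [Ideal.mem_comap, Ideal.mem_bot] at hx
      have hv : (algebraMap (symInvariants k L n) (⨂[k] _ : Fin n, L)) x = x.val := rfl
      have hx0 : x = 0 := Subtype.ext (by rw [← hv]; exact hx)
      simp [hx0])
  haveI := hp
  set q := p.comap (algebraMap (symInvariants k L n) (⨂[k] _ : Fin n, L)) with hq
  haveI : q.IsPrime := hcom ▸ hker
  let lam : ((symInvariants k L n) ⧸ q) →+* K :=
    Ideal.Quotient.lift q χ.toRingHom (fun x hx => by
      rw [hcom] at hx
      exact RingHom.mem_ker.mp hx)
  letI : Algebra ((symInvariants k L n) ⧸ q) K := lam.toAlgebra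
  have hlam : Function.Injective lam := by
    refine (injective_iff_map_eq_zero _).mpr ?_
    intro a ha
    obtain ⟨x, rfl⟩ := Ideal.Quotient.mk_surjective a
    rw [Ideal.Quotient.lift_mk] at ha
    rw [Ideal.Quotient.eq_zero_iff_mem, hcom]
    exact RingHom.mem_ker.mpr ha
  haveI : FaithfulSMul ((symInvariants k L n) ⧸ q) K :=
    (faithfulSMul_iff_algebraMap_injective _ _).mpr hlam
  haveI : FaithfulSMul ((symInvariants k L n) ⧸ q) ((⨂[k] _ : Fin n, L) ⧸ p) :=
    (faithfulSMul_iff_algebraMap_injective _ _).mpr (Ideal.algebraMap_quotient_injective)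
  haveI := Module.IsTorsionFree.trans_faithfulSMul ((symInvariants k L n) ⧸ q) K K
  haveI := Module.IsTorsionFree.trans_faithfulSMul ((symInvariants k L n) ⧸ q)
    ((⨂[k] _ : Fin n, L) ⧸ p) ((⨂[k] _ : Fin n, L) ⧸ p)
  let g : ((⨂[k] _ : Fin n, L) ⧸ p) →ₐ[(symInvariants k L n) ⧸ q] K :=
    IsAlgClosed.lift (M := K) (R := (symInvariants k L n) ⧸ q) (S := (⨂[k] _ : Fin n, L) ⧸ p)
  have key : ∀ x : symInvariants k L n,
      g (Ideal.Quotient.mk p (algebraMap (symInvariants k L n) (⨂[k] _ : Fin n, L) x))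
        = χ x := by
    intro x
    have h1 : Ideal.Quotient.mk p (algebraMap (symInvariants k L n) (⨂[k] _ : Fin n, L) x)
        = @algebraMap _ _ _ _ (Ideal.instAlgebraQuotientComapRingHomAlgebraMap (symInvariants k L n) p)
            (Ideal.Quotient.mk q x) := rfl
    rw [h1, g.commutes]
    exact Ideal.Quotient.lift_mk q χ.toRingHom _
  refine ⟨⟨g.toRingHom.comp (Ideal.Quotient.mk p), ?_⟩, ?_⟩
  · intro c
    show g (Ideal.Quotient.mk p (algebraMap k (⨂[k] _ : Fin n, L) c)) = algebraMap k K c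
    rw [IsScalarTower.algebraMap_apply k (symInvariants k L n) (⨂[k] _ : Fin n, L)]
    rw [key]
    exact χ.commutes c
  · apply AlgHom.ext
    intro x
    exact key x

end SymPowProofAux

open SymPowProofAux in
/-- Let `L/k` be a finite Galois field extension of degree `r ≥ 1` and `K` an algebraically
closed field containing `L` (compatibly with `k ⊆ L ⊆ K`). Then for every `n ≥ 0`, the set of
`k`-algebra homomorphisms `(L^{⊗_k n})^{Σ_n} → K` is finite with exactly `C(r + n - 1, n)`
elements. -/
theorem finite_and_card_algHom_symInvariants (k L K : Type*) [Field k] [Field L]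
    [Algebra k L] [IsGalois k L] [FiniteDimensional k L]
    [Field K] [IsAlgClosed K] [Algebra k K] [Algebra L K] [IsScalarTower k L K]
    (r : ℕ) (hr : Module.finrank k L = r) (hr1 : 1 ≤ r) (n : ℕ) :
    Finite ((symInvariants k L n) →ₐ[k] K) ∧
      Nat.card ((symInvariants k L n) →ₐ[k] K) = (r + n - 1).choose n := by
  classical
  haveI : Algebra.IsSeparable k L := IsGalois.to_isSeparable
  set res : ((⨂[k] _ : Fin n, L) →ₐ[k] K) → ((symInvariants k L n) →ₐ[k] K) :=
    fun φ => φ.comp (symInvariants k L n).val with hresdef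
  have res_surj : Function.Surjective res := fun χ => exists_extension χ
  set μ : ((⨂[k] _ : Fin n, L) →ₐ[k] K) → Sym (L →ₐ[k] K) n := fun φ =>
    ⟨Multiset.map (toTuple φ) Finset.univ.val, by simp⟩ with hμdef
  have key : ∀ φ ψ, res φ = res ψ ↔ μ φ = μ ψ := by
    intro φ ψ
    constructor
    · intro h
      exact Subtype.ext (multiset_eq_of_res_eq φ ψ h)
    · intro h
      exact res_eq_of_multiset_eq φ ψ (congrArg Subtype.val h)
  have μ_surj : Function.Surjective μ := by
    intro s
    have hl : s.1.toList.length = n := by rw [Multiset.length_toList]; exact s.2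
    refine ⟨ofTuple (fun i => s.1.toList.get (Fin.cast hl.symm i)), ?_⟩
    apply Subtype.ext
    show Multiset.map (toTuple (ofTuple _)) Finset.univ.val = s.1
    rw [toTuple_ofTuple, Fin.univ_val_map]
    have hofn : List.ofFn (fun i : Fin n => s.1.toList.get (Fin.cast hl.symm i))
        = s.1.toList := by
      apply List.ext_get
      · simp [hl]
      · intro i h1 h2
        simp [List.get_ofFn]
        rfl
    rw [hofn, Multiset.coe_toList]
  let e : ((symInvariants k L n) →ₐ[k] K) → Sym (L →ₐ[k] K) n :=
    fun χ => μ (Function.surjInv res_surj χ)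
  have e_bij : Function.Bijective e := by
    constructor
    · intro χ χ' h
      have h2 := (key _ _).mpr h
      rwa [Function.surjInv_eq res_surj, Function.surjInv_eq res_surj] at h2
    · intro s
      obtain ⟨φ, rfl⟩ := μ_surj s
      refine ⟨res φ, ?_⟩
      exact (key _ _).mp (Function.surjInv_eq res_surj (res φ))
  have hfin : Finite ((symInvariants k L n) →ₐ[k] K) := Finite.of_injective e e_bij.1
  refine ⟨hfin, ?_⟩
  have hcard : Nat.card ((symInvariants k L n) →ₐ[k] K) = Nat.card (Sym (L →ₐ[k] K) n) :=
    Nat.card_eq_of_bijective e e_bij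
  rw [hcard, Nat.card_eq_fintype_card, Sym.card_sym_eq_choose]
  have hE : Fintype.card (L →ₐ[k] K) = r := by
    rw [← hr]
    exact AlgHom.card k L K
  rw [hE]
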